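/- Let h > 0 and k, w ∈ C²([0,h]) with k > 0 on [0,h] and w(0) = w(h) = 0, and let ε > 0 satisfy k(z) ≥ ε on [0,h]. There exists a constant K > 0, depending only on sup_{[0,h]} |w|, k(0), ε and h, such that for every T > 0, all F₁, F₂ ∈ C([0,T]), every q₀ ∈ C¹([0,h]), and all classical solutions q₁, q₂ of the transport equation with fluxes F₁, F₂ respectively and the same initial data q₀, one has for all t ∈ [0,T]: ∫₀ʰ (q₁(z,t) − q₂(z,t))² dz ≤ K e^{Kt} (1+t²) ∫₀ᵗ (F₁(s) − F₂(s))² ds. -/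

import Mathlib

open MeasureTheory Set Filter intervalIntegral
open scoped Topology

/-- A classical solution of the transport equation `q_t + (w q)_z = (k q_z)_z`
on `[0,h] × (0,T]` with flux boundary condition `q_z(0,t) = -F(t)`,
no-flux upper boundary condition `q_z(h,t) = 0`, and initial data `q₀`,
together with its partial derivatives `qz`, `qzz`, `qt`. -/
structure ClassicalSolution (h T : ℝ) (k w F q₀ : ℝ → ℝ)
    (q qz qzz qt : ℝ → ℝ → ℝ) : Prop where
  cont : ContinuousOn (fun x : ℝ × ℝ => q x.1 x.2) (Icc 0 h ×ˢ Icc 0 T)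
  hasDeriv_z : ∀ z ∈ Icc (0:ℝ) h, ∀ t ∈ Ioc (0:ℝ) T,
    HasDerivWithinAt (fun z' => q z' t) (qz z t) (Icc 0 h) z
  hasDeriv_zz : ∀ z ∈ Icc (0:ℝ) h, ∀ t ∈ Ioc (0:ℝ) T,
    HasDerivWithinAt (fun z' => qz z' t) (qzz z t) (Icc 0 h) z
  hasDeriv_t : ∀ z ∈ Icc (0:ℝ) h, ∀ t ∈ Ioc (0:ℝ) T,
    HasDerivWithinAt (fun t' => q z t') (qt z t) (Icc 0 T) t
  cont_z : ContinuousOn (fun x : ℝ × ℝ => qz x.1 x.2) (Icc 0 h ×ˢ Ioc 0 T)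
  cont_zz : ContinuousOn (fun x : ℝ × ℝ => qzz x.1 x.2) (Icc 0 h ×ˢ Ioc 0 T)
  cont_t : ContinuousOn (fun x : ℝ × ℝ => qt x.1 x.2) (Icc 0 h ×ˢ Ioc 0 T)
  pde : ∀ z ∈ Icc (0:ℝ) h, ∀ t ∈ Ioc (0:ℝ) T,
    qt z t + (derivWithin w (Icc 0 h) z * q z t + w z * qz z t)
      = derivWithin k (Icc 0 h) z * qz z t + k z * qzz z t
  bc_lower : ∀ t ∈ Ioc (0:ℝ) T, qz 0 t = -F t
  bc_upper : ∀ t ∈ Ioc (0:ℝ) T, qz h t = 0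
  ic : ∀ z ∈ Icc (0:ℝ) h, q z 0 = q₀ z

/-- `q` is a classical solution of the transport equation (partial derivatives exist). -/
def IsClassicalSolution (h T : ℝ) (k w F q₀ : ℝ → ℝ) (q : ℝ → ℝ → ℝ) : Prop :=
  ∃ qz qzz qt, ClassicalSolution h T k w F q₀ q qz qzz qt

/-- Continuity of a slice in the first variable. -/
lemma sliceZ {A B : Set ℝ} {v : ℝ → ℝ → ℝ}
    (hv : ContinuousOn (fun x : ℝ × ℝ => v x.1 x.2) (A ×ˢ B)) {s : ℝ} (hs : s ∈ B) :
    ContinuousOn (fun z => v z s) A := by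
  have : ContinuousOn ((fun x : ℝ × ℝ => v x.1 x.2) ∘ fun z => (z, s)) A :=
    hv.comp (continuous_id.prodMk continuous_const).continuousOn
      (fun z hz => Set.mk_mem_prod hz hs)
  exact this

/-- Continuity of a slice in the second variable. -/
lemma sliceT {A B : Set ℝ} {v : ℝ → ℝ → ℝ}
    (hv : ContinuousOn (fun x : ℝ × ℝ => v x.1 x.2) (A ×ˢ B)) {z : ℝ} (hz : z ∈ A) :
    ContinuousOn (fun s => v z s) B := by
  have : ContinuousOn ((fun x : ℝ × ℝ => v x.1 x.2) ∘ fun s => (z, s)) B :=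
    hv.comp (continuous_const.prodMk continuous_id).continuousOn
      (fun s hs => Set.mk_mem_prod hz hs)
  exact this

/-- elementary AM-GM-type inequality used for the trace term -/
lemma amgm_aux {ε : ℝ} (hε : 0 < ε) (a b : ℝ) :
    |2 * a * b| ≤ 1 / (2 * ε) * a ^ 2 + 2 * ε * b ^ 2 := by
  have h2ε : (0:ℝ) < 2 * ε := by linarith
  have habs : |2 * a * b| = 2 * |a| * |b| := by
    rw [abs_mul, abs_mul, abs_two]
  have h2 : 0 ≤ |a| ^ 2 + 4 * ε ^ 2 * |b| ^ 2 - 4 * ε * (|a| * |b|) := by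
    nlinarith [sq_nonneg (|a| - 2 * ε * |b|)]
  have h3 : 0 ≤ (|a| ^ 2 + 4 * ε ^ 2 * |b| ^ 2 - 4 * ε * (|a| * |b|)) / (2 * ε) :=
    div_nonneg h2 h2ε.le
  have h4 : (|a| ^ 2 + 4 * ε ^ 2 * |b| ^ 2 - 4 * ε * (|a| * |b|)) / (2 * ε)
      = 1 / (2 * ε) * |a| ^ 2 + 2 * ε * |b| ^ 2 - 2 * |a| * |b| := by
    field_simp; ring
  rw [habs, ← sq_abs a, ← sq_abs b]
  linarith [h4 ▸ h3]

set_option maxHeartbeats 1000000 in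
/-- Stability estimate: the `L²` distance between two solutions with the same
initial data is controlled by the `L²` distance between their fluxes. -/
theorem stability_estimate
    (h ε : ℝ) (k w : ℝ → ℝ) (hh : 0 < h) (hε : 0 < ε)
    (hk : ContDiffOn ℝ 2 k (Icc 0 h)) (hw : ContDiffOn ℝ 2 w (Icc 0 h))
    (hkpos : ∀ z ∈ Icc (0:ℝ) h, 0 < k z)
    (hkε : ∀ z ∈ Icc (0:ℝ) h, ε ≤ k z)
    (hw0 : w 0 = 0) (hwh : w h = 0) :
    ∃ K > (0:ℝ), ∀ (T : ℝ) (F₁ F₂ q₀ : ℝ → ℝ) (q₁ q₂ : ℝ → ℝ → ℝ),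
      0 < T → ContinuousOn F₁ (Icc 0 T) → ContinuousOn F₂ (Icc 0 T) →
      ContDiffOn ℝ 1 q₀ (Icc 0 h) →
      IsClassicalSolution h T k w F₁ q₀ q₁ →
      IsClassicalSolution h T k w F₂ q₀ q₂ →
      ∀ t ∈ Icc (0:ℝ) T,
        (∫ z in (0:ℝ)..h, (q₁ z t - q₂ z t) ^ 2) ≤
          K * Real.exp (K * t) * (1 + t ^ 2) * ∫ s in (0:ℝ)..t, (F₁ s - F₂ s) ^ 2 := by
  have hudiff : UniqueDiffOn ℝ (Icc (0:ℝ) h) := uniqueDiffOn_Icc hh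
  set k' : ℝ → ℝ := derivWithin k (Icc (0:ℝ) h) with hk'def
  set w' : ℝ → ℝ := derivWithin w (Icc (0:ℝ) h) with hw'def
  have hk'c : ContinuousOn k' (Icc (0:ℝ) h) :=
    (hk.derivWithin (m := 1) hudiff (by norm_num)).continuousOn
  have hw'c : ContinuousOn w' (Icc (0:ℝ) h) :=
    (hw.derivWithin (m := 1) hudiff (by norm_num)).continuousOn
  obtain ⟨W, hW⟩ := isCompact_Icc.exists_bound_of_continuousOn hw'c
  set W₁ : ℝ := max W 0 with hW₁def
  have hW₁nonneg : 0 ≤ W₁ := le_max_right _ _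
  have hW₁ : ∀ z ∈ Icc (0:ℝ) h, |w' z| ≤ W₁ := fun z hz =>
    le_trans (by simpa using hW z hz) (le_max_left _ _)
  set K₀ : ℝ := 1 / h + 1 / (2 * ε) + W₁ with hK₀def
  have hK₀pos : 0 < K₀ := by
    have h1 : 0 < 1 / h := by positivity
    have h2 : 0 < 1 / (2 * ε) := by positivity
    rw [hK₀def]
    linarith
  set CC : ℝ := k 0 ^ 2 + 1 with hCCdef
  have hCCpos : 0 < CC := by positivity
  refine ⟨K₀ + CC, by linarith, ?_⟩
  intro T F₁ F₂ q₀ q₁ q₂ hT hF₁ hF₂ hq₀ hs₁ hs₂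
  obtain ⟨qz₁, qzz₁, qt₁, S₁⟩ := hs₁
  obtain ⟨qz₂, qzz₂, qt₂, S₂⟩ := hs₂
  set u : ℝ → ℝ → ℝ := fun z s => q₁ z s - q₂ z s with hudef
  set uz : ℝ → ℝ → ℝ := fun z s => qz₁ z s - qz₂ z s with huzdef
  set uzz : ℝ → ℝ → ℝ := fun z s => qzz₁ z s - qzz₂ z s with huzzdef
  set ut : ℝ → ℝ → ℝ := fun z s => qt₁ z s - qt₂ z s with hutdef
  set G : ℝ → ℝ := fun s => F₁ s - F₂ s with hGdef
  set E : ℝ → ℝ := fun s => ∫ z in (0:ℝ)..h, (u z s) ^ 2 with hEdef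
  set I : ℝ → ℝ := fun s => ∫ r in (0:ℝ)..s, (G r) ^ 2 with hIdef
  -- basic facts about the difference
  have hucont : ContinuousOn (fun x : ℝ × ℝ => u x.1 x.2) (Icc 0 h ×ˢ Icc 0 T) :=
    S₁.cont.sub S₂.cont
  have huzcont : ContinuousOn (fun x : ℝ × ℝ => uz x.1 x.2) (Icc 0 h ×ˢ Ioc 0 T) :=
    S₁.cont_z.sub S₂.cont_z
  have hutcont : ContinuousOn (fun x : ℝ × ℝ => ut x.1 x.2) (Icc 0 h ×ˢ Ioc 0 T) :=
    S₁.cont_t.sub S₂.cont_t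
  have hu_z : ∀ z ∈ Icc (0:ℝ) h, ∀ s ∈ Ioc (0:ℝ) T,
      HasDerivWithinAt (fun z' => u z' s) (uz z s) (Icc 0 h) z := fun z hz s hs =>
    (S₁.hasDeriv_z z hz s hs).sub (S₂.hasDeriv_z z hz s hs)
  have huz_z : ∀ z ∈ Icc (0:ℝ) h, ∀ s ∈ Ioc (0:ℝ) T,
      HasDerivWithinAt (fun z' => uz z' s) (uzz z s) (Icc 0 h) z := fun z hz s hs =>
    (S₁.hasDeriv_zz z hz s hs).sub (S₂.hasDeriv_zz z hz s hs)
  have hu_t : ∀ z ∈ Icc (0:ℝ) h, ∀ s ∈ Ioc (0:ℝ) T,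
      HasDerivWithinAt (fun s' => u z s') (ut z s) (Icc 0 T) s := fun z hz s hs =>
    (S₁.hasDeriv_t z hz s hs).sub (S₂.hasDeriv_t z hz s hs)
  have hpde : ∀ z ∈ Icc (0:ℝ) h, ∀ s ∈ Ioc (0:ℝ) T,
      ut z s = k' z * uz z s + k z * uzz z s - w' z * u z s - w z * uz z s := by
    intro z hz s hs
    have h1 := S₁.pde z hz s hs
    have h2 := S₂.pde z hz s hs
    simp only [hutdef, huzdef, hudef, huzzdef, hk'def, hw'def]
    rw [← hw'def, ← hk'def] at h1 h2
    linarith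
  have hbc0 : ∀ s ∈ Ioc (0:ℝ) T, uz 0 s = -G s := by
    intro s hs
    simp only [huzdef, hGdef, S₁.bc_lower s hs, S₂.bc_lower s hs]
    ring
  have hbch : ∀ s ∈ Ioc (0:ℝ) T, uz h s = 0 := by
    intro s hs
    simp only [huzdef, S₁.bc_upper s hs, S₂.bc_upper s hs, sub_zero]
  have hic : ∀ z ∈ Icc (0:ℝ) h, u z 0 = 0 := by
    intro z hz
    simp only [hudef, S₁.ic z hz, S₂.ic z hz, sub_self]
  -- slices
  have hu_sliceZ : ∀ s ∈ Icc (0:ℝ) T, ContinuousOn (fun z => u z s) (Icc 0 h) :=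
    fun s hs => sliceZ hucont hs
  have huz_sliceZ : ∀ s ∈ Ioc (0:ℝ) T, ContinuousOn (fun z => uz z s) (Icc 0 h) :=
    fun s hs => sliceZ huzcont hs
  have hut_sliceZ : ∀ s ∈ Ioc (0:ℝ) T, ContinuousOn (fun z => ut z s) (Icc 0 h) :=
    fun s hs => sliceZ hutcont hs
  have hu_sliceT : ∀ z ∈ Icc (0:ℝ) h, ContinuousOn (fun s => u z s) (Icc 0 T) :=
    fun z hz => sliceT hucont hz
  -- global bound for u
  obtain ⟨M, hM⟩ := (isCompact_Icc.prod isCompact_Icc).exists_bound_of_continuousOn hucont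
  -- continuity of the energy
  have hEcont : ContinuousOn E (Icc 0 T) := by
    intro x₀ hx₀
    apply intervalIntegral.continuousWithinAt_of_dominated_interval
      (bound := fun _ => M ^ 2)
    · filter_upwards [eventually_mem_nhdsWithin] with x hx
      rw [Set.uIoc_of_le hh.le]
      exact (((hu_sliceZ x hx).mono Ioc_subset_Icc_self).pow 2).aestronglyMeasurable
        measurableSet_Ioc
    · filter_upwards [eventually_mem_nhdsWithin] with x hx
      apply ae_of_all
      intro z hz
      rw [Set.uIoc_of_le hh.le] at hz
      have hmem : ((z, x) : ℝ × ℝ) ∈ Icc 0 h ×ˢ Icc 0 T :=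
        Set.mk_mem_prod (Ioc_subset_Icc_self hz) hx
      have := hM (z, x) hmem
      rw [norm_pow]
      exact pow_le_pow_left₀ (norm_nonneg _) this 2
    · exact intervalIntegrable_const
    · apply ae_of_all
      intro z hz
      rw [Set.uIoc_of_le hh.le] at hz
      exact ((hu_sliceT z (Ioc_subset_Icc_self hz)) x₀ hx₀).pow 2
  -- the forcing integral
  have hGc : ContinuousOn G (Icc 0 T) := hF₁.sub hF₂
  have hIcont : ContinuousOn I (Icc 0 T) := by
    have hint : IntegrableOn (fun r => (G r) ^ 2) (uIcc (0:ℝ) T) volume := by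
      rw [Set.uIcc_of_le hT.le]
      exact (hGc.pow 2).integrableOn_compact isCompact_Icc
    have := intervalIntegral.continuousOn_primitive_interval hint
    rwa [Set.uIcc_of_le hT.le] at this
  have hIderiv : ∀ x ∈ Ioo (0:ℝ) T, HasDerivAt I ((G x) ^ 2) x := by
    intro x hx
    apply intervalIntegral.integral_hasDerivAt_right
    · apply ContinuousOn.intervalIntegrable
      apply (hGc.pow 2).mono
      rw [Set.uIcc_of_le hx.1.le]
      exact Icc_subset_Icc le_rfl hx.2.le
    · exact ⟨Icc 0 T, Icc_mem_nhds hx.1 hx.2,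
        ((hGc.pow 2)).aestronglyMeasurable measurableSet_Icc⟩
    · exact ((hGc x ⟨hx.1.le, hx.2.le⟩).continuousAt (Icc_mem_nhds hx.1 hx.2)).pow 2
  have hInonneg : ∀ s ∈ Icc (0:ℝ) T, 0 ≤ I s := fun s hs =>
    intervalIntegral.integral_nonneg hs.1 (fun r _ => sq_nonneg _)
  -- key integration-by-parts identity
  have keyFTC : ∀ s ∈ Ioc (0:ℝ) T,
      (∫ z in (0:ℝ)..h,
        (2 * u z s * ut z s + 2 * k z * (uz z s) ^ 2 + w' z * (u z s) ^ 2))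
        = 2 * k 0 * u 0 s * G s := by
    intro s hs
    have hsIcc : s ∈ Icc (0:ℝ) T := Ioc_subset_Icc_self hs
    have hus := hu_sliceZ s hsIcc
    have huzs := huz_sliceZ s hs
    have huts := hut_sliceZ s hs
    set Φ : ℝ → ℝ := fun z => 2 * u z s * k z * uz z s - w z * (u z s) ^ 2 with hΦdef
    have hΦcont : ContinuousOn Φ (Icc (0:ℝ) h) :=
      (((continuousOn_const.mul hus).mul hk.continuousOn).mul huzs).sub
        (hw.continuousOn.mul (hus.pow 2))
    have hΦderiv : ∀ z ∈ Icc (0:ℝ) h, HasDerivWithinAt Φ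
        (2 * u z s * ut z s + 2 * k z * (uz z s) ^ 2 + w' z * (u z s) ^ 2)
        (Icc 0 h) z := by
      intro z hz
      have hdu := hu_z z hz s hs
      have hduz := huz_z z hz s hs
      have hdk : HasDerivWithinAt k (k' z) (Icc 0 h) z :=
        (hk.differentiableOn (by norm_num) z hz).hasDerivWithinAt
      have hdw : HasDerivWithinAt w (w' z) (Icc 0 h) z :=
        (hw.differentiableOn (by norm_num) z hz).hasDerivWithinAt
      have h1 : HasDerivWithinAt (fun z' => 2 * u z' s) (2 * uz z s) (Icc 0 h) z :=
        hdu.const_mul 2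
      have h3 := (h1.mul hdk).mul hduz
      have h4 := hdu.fun_pow 2
      have h5 := hdw.mul h4
      have h6 := h3.sub h5
      refine h6.congr_deriv ?_
      have hp := hpde z hz s hs
      push_cast [Pi.mul_apply]
      linear_combination (-(2 * u z s)) * hp
    have hgcont : ContinuousOn
        (fun z => 2 * u z s * ut z s + 2 * k z * (uz z s) ^ 2 + w' z * (u z s) ^ 2)
        (Icc (0:ℝ) h) :=
      (((continuousOn_const.mul hus).mul huts).add
        ((continuousOn_const.mul hk.continuousOn).mul (huzs.pow 2))).add
        (hw'c.mul (hus.pow 2))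
    have hint : IntervalIntegrable
        (fun z => 2 * u z s * ut z s + 2 * k z * (uz z s) ^ 2 + w' z * (u z s) ^ 2)
        volume 0 h := by
      apply ContinuousOn.intervalIntegrable
      rwa [Set.uIcc_of_le hh.le]
    have hftc := intervalIntegral.integral_eq_sub_of_hasDeriv_right_of_le hh.le hΦcont
      (fun x hx => ((hΦderiv x (Ioo_subset_Icc_self hx)).hasDerivAt
        (Icc_mem_nhds hx.1 hx.2)).hasDerivWithinAt) hint
    rw [hftc]
    simp only [hΦdef]
    rw [hbch s hs, hbc0 s hs, hwh, hw0]
    ring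
  -- trace inequality
  have htrace : ∀ s ∈ Ioc (0:ℝ) T,
      (u 0 s) ^ 2 ≤ 1 / h * E s + 1 / (2 * ε) * E s
        + 2 * ε * (∫ z in (0:ℝ)..h, (uz z s) ^ 2) := by
    intro s hs
    have hsIcc : s ∈ Icc (0:ℝ) T := Ioc_subset_Icc_self hs
    have hus := hu_sliceZ s hsIcc
    have huzs := huz_sliceZ s hs
    have habs_cont : ContinuousOn (fun y => |2 * u y s * uz y s|) (Icc (0:ℝ) h) :=
      ((continuousOn_const.mul hus).mul huzs).abs
    set A : ℝ := ∫ y in (0:ℝ)..h, |2 * u y s * uz y s| with hAdef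
    have hftcz : ∀ z ∈ Icc (0:ℝ) h,
        (∫ y in (0:ℝ)..z, 2 * u y s * uz y s) = (u z s) ^ 2 - (u 0 s) ^ 2 := by
      intro z hz
      apply intervalIntegral.integral_eq_sub_of_hasDeriv_right_of_le hz.1
      · exact (hus.pow 2).mono (Icc_subset_Icc le_rfl hz.2)
      · intro x hx
        have hxIcc : x ∈ Icc (0:ℝ) h := ⟨hx.1.le, hx.2.le.trans hz.2⟩
        have hd : HasDerivAt (fun y => (u y s) ^ 2) (2 * u x s * uz x s) x := by
          have hmem : Icc (0:ℝ) h ∈ 𝓝 x :=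
            Icc_mem_nhds hx.1 (lt_of_lt_of_le hx.2 hz.2)
          have := ((hu_z x hxIcc s hs).hasDerivAt hmem).fun_pow 2
          simpa using this
        exact hd.hasDerivWithinAt
      · apply ContinuousOn.intervalIntegrable
        apply ((continuousOn_const.mul hus).mul huzs).mono
        rw [Set.uIcc_of_le hz.1]
        exact Icc_subset_Icc le_rfl hz.2
    have hpoint : ∀ z ∈ Icc (0:ℝ) h, (u 0 s) ^ 2 ≤ (u z s) ^ 2 + A := by
      intro z hz
      have h1 := hftcz z hz
      have h2 : |∫ y in (0:ℝ)..z, 2 * u y s * uz y s|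
          ≤ ∫ y in (0:ℝ)..z, |2 * u y s * uz y s| :=
        intervalIntegral.abs_integral_le_integral_abs hz.1
      have hi1 : IntervalIntegrable (fun y => |2 * u y s * uz y s|) volume 0 z := by
        apply ContinuousOn.intervalIntegrable
        apply habs_cont.mono
        rw [Set.uIcc_of_le hz.1]
        exact Icc_subset_Icc le_rfl hz.2
      have hi2 : IntervalIntegrable (fun y => |2 * u y s * uz y s|) volume z h := by
        apply ContinuousOn.intervalIntegrable
        apply habs_cont.mono
        rw [Set.uIcc_of_le hz.2]
        exact Icc_subset_Icc hz.1 le_rfl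
      have h3 : (∫ y in (0:ℝ)..z, |2 * u y s * uz y s|) ≤ A := by
        rw [hAdef, ← intervalIntegral.integral_add_adjacent_intervals hi1 hi2]
        have h4 : 0 ≤ ∫ y in z..h, |2 * u y s * uz y s| :=
          intervalIntegral.integral_nonneg hz.2 (fun _ _ => abs_nonneg _)
        linarith
      have h5 := neg_abs_le (∫ y in (0:ℝ)..z, 2 * u y s * uz y s)
      linarith
    have hintA : h * (u 0 s) ^ 2 ≤ E s + h * A := by
      have hi_rhs : IntervalIntegrable (fun z => (u z s) ^ 2 + A) volume 0 h := by
        apply ContinuousOn.intervalIntegrable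
        rw [Set.uIcc_of_le hh.le]
        exact (hus.pow 2).add continuousOn_const
      have hmono := intervalIntegral.integral_mono_on hh.le intervalIntegrable_const
        hi_rhs hpoint
      have hconst : (∫ _z in (0:ℝ)..h, (u 0 s) ^ 2) = h * (u 0 s) ^ 2 := by
        simp [smul_eq_mul]
      have hadd : (∫ z in (0:ℝ)..h, ((u z s) ^ 2 + A)) = E s + h * A := by
        rw [intervalIntegral.integral_add ?_ intervalIntegrable_const]
        · simp [hEdef, smul_eq_mul]
        · apply ContinuousOn.intervalIntegrable
          rw [Set.uIcc_of_le hh.le]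
          exact hus.pow 2
      rw [hconst, hadd] at hmono
      exact hmono
    have hA_le : A ≤ 1 / (2 * ε) * E s + 2 * ε * (∫ z in (0:ℝ)..h, (uz z s) ^ 2) := by
      have hpt : ∀ z ∈ Icc (0:ℝ) h,
          |2 * u z s * uz z s| ≤ 1 / (2 * ε) * (u z s) ^ 2 + 2 * ε * (uz z s) ^ 2 :=
        fun z _ => amgm_aux hε (u z s) (uz z s)
      have hi_lhs : IntervalIntegrable (fun z => |2 * u z s * uz z s|) volume 0 h := by
        apply ContinuousOn.intervalIntegrable; rwa [Set.uIcc_of_le hh.le]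
      have hi_a : IntervalIntegrable (fun z => 1 / (2 * ε) * (u z s) ^ 2) volume 0 h := by
        apply ContinuousOn.intervalIntegrable
        rw [Set.uIcc_of_le hh.le]
        exact continuousOn_const.mul (hus.pow 2)
      have hi_b : IntervalIntegrable (fun z => 2 * ε * (uz z s) ^ 2) volume 0 h := by
        apply ContinuousOn.intervalIntegrable
        rw [Set.uIcc_of_le hh.le]
        exact continuousOn_const.mul (huzs.pow 2)
      have hmono := intervalIntegral.integral_mono_on hh.le hi_lhs (hi_a.add hi_b) hpt
      rw [intervalIntegral.integral_add hi_a hi_b,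
        intervalIntegral.integral_const_mul, intervalIntegral.integral_const_mul] at hmono
      exact hmono
    have hdiv : (u 0 s) ^ 2 ≤ 1 / h * E s + A := by
      rw [← mul_le_mul_iff_right₀ hh]
      calc h * (u 0 s) ^ 2 ≤ E s + h * A := hintA
        _ = h * (1 / h * E s + A) := by field_simp
    linarith
  -- derivative of the energy, with bound
  set D : ℝ → ℝ := fun x => ∫ z in (0:ℝ)..h, 2 * u z x * ut z x with hDdef
  have hED : ∀ x ∈ Ioo (0:ℝ) T, HasDerivAt E (D x) x := by
    intro x hx
    set δ : ℝ := min (x / 2) ((T - x) / 2) with hδdef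
    have hδpos : 0 < δ := lt_min (by linarith [hx.1]) (by linarith [hx.2])
    have hδ1 : 0 < x - δ := by
      have := min_le_left (x / 2) ((T - x) / 2)
      simp only [hδdef]
      linarith [hx.1]
    have hδ2 : x + δ < T := by
      have := min_le_right (x / 2) ((T - x) / 2)
      simp only [hδdef]
      linarith [hx.2]
    have hsub : Icc (x - δ) (x + δ) ⊆ Ioc (0:ℝ) T :=
      fun y hy => ⟨lt_of_lt_of_le hδ1 hy.1, hy.2.trans hδ2.le⟩
    have hball : Metric.ball x δ ⊆ Icc (x - δ) (x + δ) := by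
      intro y hy
      rw [Real.ball_eq_Ioo] at hy
      exact ⟨hy.1.le, hy.2.le⟩
    -- bound on the compact slab
    have hprodcont : ContinuousOn (fun p : ℝ × ℝ => 2 * u p.1 p.2 * ut p.1 p.2)
        (Icc 0 h ×ˢ Icc (x - δ) (x + δ)) := by
      apply ContinuousOn.mul
      · exact continuousOn_const.mul (hucont.mono (Set.prod_mono subset_rfl
          (fun y hy => Ioc_subset_Icc_self (hsub hy))))
      · exact hutcont.mono (Set.prod_mono subset_rfl hsub)
    obtain ⟨M₂, hM₂⟩ := (isCompact_Icc.prod isCompact_Icc).exists_bound_of_continuousOn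
      hprodcont
    have hmain := (intervalIntegral.hasDerivAt_integral_of_dominated_loc_of_deriv_le
      (F := fun x' z => (u z x') ^ 2) (F' := fun x' z => 2 * u z x' * ut z x')
      (bound := fun _ => M₂) (a := 0) (b := h) (x₀ := x) (μ := volume) (Metric.ball_mem_nhds x hδpos)
      ?_ ?_ ?_ ?_ ?_ ?_).2
    · exact hmain
    · filter_upwards [IsOpen.mem_nhds isOpen_Ioo hx] with x' hx'
      rw [Set.uIoc_of_le hh.le]
      exact (((hu_sliceZ x' ⟨hx'.1.le, hx'.2.le⟩).mono Ioc_subset_Icc_self).pow 2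
        ).aestronglyMeasurable measurableSet_Ioc
    · apply ContinuousOn.intervalIntegrable
      rw [Set.uIcc_of_le hh.le]
      exact (hu_sliceZ x ⟨hx.1.le, hx.2.le⟩).pow 2
    · rw [Set.uIoc_of_le hh.le]
      apply ContinuousOn.aestronglyMeasurable _ measurableSet_Ioc
      apply ContinuousOn.mono _ Ioc_subset_Icc_self
      exact (continuousOn_const.mul (hu_sliceZ x ⟨hx.1.le, hx.2.le⟩)).mul
        (hut_sliceZ x ⟨hx.1, hx.2.le⟩)
    · apply ae_of_all
      intro z hz x' hx'
      rw [Set.uIoc_of_le hh.le] at hz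
      exact hM₂ (z, x') (Set.mk_mem_prod (Ioc_subset_Icc_self hz) (hball hx'))
    · exact intervalIntegrable_const
    · apply ae_of_all
      intro z hz x' hx'
      rw [Set.uIoc_of_le hh.le] at hz
      have hx'Ioc : x' ∈ Ioc (0:ℝ) T := hsub (hball hx')
      have hx'lt : x' < T := by
        have := (hball hx').2
        linarith
      have hmem : Icc (0:ℝ) T ∈ 𝓝 x' := Icc_mem_nhds hx'Ioc.1 hx'lt
      have := ((hu_t z (Ioc_subset_Icc_self hz) x' hx'Ioc).hasDerivAt hmem).fun_pow 2
      simpa using this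
  have hDle : ∀ x ∈ Ioo (0:ℝ) T, D x ≤ K₀ * E x + CC * (G x) ^ 2 := by
    intro x hx
    have hxIoc : x ∈ Ioc (0:ℝ) T := ⟨hx.1, hx.2.le⟩
    have hxIcc : x ∈ Icc (0:ℝ) T := ⟨hx.1.le, hx.2.le⟩
    have hus := hu_sliceZ x hxIcc
    have huzs := huz_sliceZ x hxIoc
    have huts := hut_sliceZ x hxIoc
    set J : ℝ := ∫ z in (0:ℝ)..h, (uz z x) ^ 2 with hJdef
    have hi1 : IntervalIntegrable (fun z => 2 * u z x * ut z x) volume 0 h := by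
      apply ContinuousOn.intervalIntegrable
      rw [Set.uIcc_of_le hh.le]
      exact (continuousOn_const.mul hus).mul huts
    have hi2 : IntervalIntegrable (fun z => 2 * k z * (uz z x) ^ 2) volume 0 h := by
      apply ContinuousOn.intervalIntegrable
      rw [Set.uIcc_of_le hh.le]
      exact (continuousOn_const.mul hk.continuousOn).mul (huzs.pow 2)
    have hi3 : IntervalIntegrable (fun z => w' z * (u z x) ^ 2) volume 0 h := by
      apply ContinuousOn.intervalIntegrable
      rw [Set.uIcc_of_le hh.le]
      exact hw'c.mul (hus.pow 2)
    have hkey := keyFTC x hxIoc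
    rw [intervalIntegral.integral_add (hi1.add hi2) hi3,
      intervalIntegral.integral_add hi1 hi2] at hkey
    have hsplit : D x = 2 * k 0 * u 0 x * G x
        - (∫ z in (0:ℝ)..h, 2 * k z * (uz z x) ^ 2)
        - (∫ z in (0:ℝ)..h, w' z * (u z x) ^ 2) := by
      rw [hDdef]; linarith
    -- lower bound for the diffusion term
    have hkJ : 2 * ε * J ≤ ∫ z in (0:ℝ)..h, 2 * k z * (uz z x) ^ 2 := by
      have hiεb : IntervalIntegrable (fun z => 2 * ε * (uz z x) ^ 2) volume 0 h := by
        apply ContinuousOn.intervalIntegrable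
        rw [Set.uIcc_of_le hh.le]
        exact continuousOn_const.mul (huzs.pow 2)
      have hmono := intervalIntegral.integral_mono_on hh.le hiεb hi2
        (fun z hz => by
          have := hkε z hz
          nlinarith [sq_nonneg (uz z x)])
      rwa [intervalIntegral.integral_const_mul] at hmono
    -- bound for the w' term
    have hwE : -(∫ z in (0:ℝ)..h, w' z * (u z x) ^ 2) ≤ W₁ * E x := by
      rw [← intervalIntegral.integral_neg]
      have hiW : IntervalIntegrable (fun z => W₁ * (u z x) ^ 2) volume 0 h := by
        apply ContinuousOn.intervalIntegrable
        rw [Set.uIcc_of_le hh.le]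
        exact continuousOn_const.mul (hus.pow 2)
      have hmono := intervalIntegral.integral_mono_on hh.le hi3.neg hiW
        (fun z hz => by
          have h1 := hW₁ z hz
          have h2 := neg_abs_le (w' z)
          simp only [Pi.neg_apply]
          nlinarith [sq_nonneg (u z x)])
      rwa [intervalIntegral.integral_const_mul] at hmono
    have hAM : 2 * k 0 * u 0 x * G x ≤ (u 0 x) ^ 2 + k 0 ^ 2 * (G x) ^ 2 := by
      nlinarith [sq_nonneg (u 0 x - k 0 * G x)]
    have htr := htrace x hxIoc
    have hGsq : 0 ≤ (G x) ^ 2 := sq_nonneg _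
    rw [hsplit, hK₀def, hCCdef]
    rw [← hJdef] at htr
    clear_value J D E G u uz uzz ut W₁ k' w'
    linarith [htr, hkJ, hwE, hAM, hGsq]
  -- Lyapunov function
  set Ψ : ℝ → ℝ := fun s => Real.exp (-K₀ * s) * E s - CC * I s with hΨdef
  have hΨcont : ContinuousOn Ψ (Icc 0 T) :=
    ((Real.continuous_exp.comp (continuous_const.mul continuous_id)).continuousOn.mul
      hEcont).sub (continuousOn_const.mul hIcont)
  have hΨderiv : ∀ x ∈ Ioo (0:ℝ) T, HasDerivAt Ψ
      (-K₀ * Real.exp (-K₀ * x) * E x + Real.exp (-K₀ * x) * D x - CC * (G x) ^ 2) x := by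
    intro x hx
    have he : HasDerivAt (fun s => Real.exp (-K₀ * s)) (-K₀ * Real.exp (-K₀ * x)) x := by
      have := ((hasDerivAt_id x).const_mul (-K₀)).exp
      simpa [mul_comm] using this
    have h1 := he.mul (hED x hx)
    have h2 := (hIderiv x hx).const_mul CC
    have h3 := h1.sub h2
    refine h3.congr_deriv ?_; ring
  have hanti : AntitoneOn Ψ (Icc 0 T) := by
    apply antitoneOn_of_deriv_nonpos (convex_Icc 0 T) hΨcont
    · intro x hx
      rw [interior_Icc] at hx
      exact (hΨderiv x hx).differentiableAt.differentiableWithinAt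
    · intro x hx
      rw [interior_Icc] at hx
      rw [(hΨderiv x hx).deriv]
      have hDle' := hDle x hx
      have hexppos := Real.exp_pos (-K₀ * x)
      have hexp1 : Real.exp (-K₀ * x) ≤ 1 := by
        apply Real.exp_le_one_iff.mpr
        nlinarith [hx.1, hK₀pos]
      have p1 : Real.exp (-K₀ * x) * D x
          ≤ Real.exp (-K₀ * x) * (K₀ * E x + CC * (G x) ^ 2) :=
        mul_le_mul_of_nonneg_left hDle' hexppos.le
      have p2 : Real.exp (-K₀ * x) * (K₀ * E x + CC * (G x) ^ 2)
          = K₀ * Real.exp (-K₀ * x) * E x + Real.exp (-K₀ * x) * (CC * (G x) ^ 2) := by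
        ring
      have p3 : Real.exp (-K₀ * x) * (CC * (G x) ^ 2) ≤ CC * (G x) ^ 2 :=
        mul_le_of_le_one_left (by positivity) hexp1
      linarith
  -- initial value
  have hE0 : E 0 = 0 := by
    have : (∫ z in (0:ℝ)..h, (u z 0) ^ 2) = ∫ z in (0:ℝ)..h, (0:ℝ) := by
      apply intervalIntegral.integral_congr
      intro z hz
      rw [Set.uIcc_of_le hh.le] at hz
      simp [hic z hz]
    rw [hEdef]
    simp only [this, intervalIntegral.integral_zero]
  have hΨ0 : Ψ 0 = 0 := by
    simp [hΨdef, hIdef, hE0, intervalIntegral.integral_same]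
  -- conclusion
  intro t ht
  have hΨt : Ψ t ≤ 0 := by
    rw [← hΨ0]
    exact hanti (Set.left_mem_Icc.mpr hT.le) ht ht.1
  have hEt : Real.exp (-K₀ * t) * E t ≤ CC * I t := by
    simp only [hΨdef] at hΨt
    linarith
  have hstep : E t ≤ Real.exp (K₀ * t) * (CC * I t) := by
    have hid : E t = Real.exp (K₀ * t) * (Real.exp (-K₀ * t) * E t) := by
      rw [← mul_assoc, ← Real.exp_add]
      simp
    rw [hid]
    exact mul_le_mul_of_nonneg_left hEt (Real.exp_pos _).le
  have hIt : 0 ≤ I t := hInonneg t ht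
  have hexp : Real.exp (K₀ * t) ≤ Real.exp ((K₀ + CC) * t) :=
    Real.exp_le_exp.mpr (by nlinarith [ht.1, hCCpos])
  have hfinal : E t ≤ (K₀ + CC) * Real.exp ((K₀ + CC) * t) * (1 + t ^ 2) * I t := by
    calc E t ≤ Real.exp (K₀ * t) * (CC * I t) := hstep
      _ = CC * Real.exp (K₀ * t) * 1 * I t := by ring
      _ ≤ (K₀ + CC) * Real.exp ((K₀ + CC) * t) * (1 + t ^ 2) * I t := by
          have h1 : CC * Real.exp (K₀ * t) ≤ (K₀ + CC) * Real.exp ((K₀ + CC) * t) := by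
            apply mul_le_mul (by linarith) hexp (Real.exp_pos _).le (by linarith)
          have h2 : (1:ℝ) ≤ 1 + t ^ 2 := by nlinarith [sq_nonneg t]
          have h3 : 0 ≤ CC * Real.exp (K₀ * t) := by positivity
          have h4 : 0 ≤ (K₀ + CC) * Real.exp ((K₀ + CC) * t) := by positivity
          have := mul_le_mul h1 h2 (by norm_num) h4
          exact mul_le_mul_of_nonneg_right this hIt
  exact hfinal
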